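/- With notation as in the context, (E₀² − L²)² + 8·E₀·V³ − 4·A⁴ = k⁴·(I₁² + 2·I₂). (In the paper k = κ/(16π), the left-hand side is the determinant of the energy-momentum endomorphism Q, and this identity shows det Q is expressed through the two O(3,2) Casimir invariants of the Henneaux–Teitelboim charge matrix, hence is a geometric invariant.) -/

import Mathlib

set_option maxHeartbeats 4000000


open Matrix

/-- `det Q` is expressed through the two `O(3,2)` Casimir invariants of the
Henneaux–Teitelboim charge matrix:
`(E₀² − L²)² + 8·E₀·V³ − 4·A⁴ = k⁴·(I₁² + 2·I₂)`. -/
theorem detQ_eq_casimir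
    (J : Matrix (Fin 5) (Fin 5) ℝ) (hJ : Jᵀ = -J)
    (η : Matrix (Fin 5) (Fin 5) ℝ)
    (hη : η = Matrix.diagonal ![-1, 1, 1, 1, -1])
    (k : ℝ) (hk : 0 < k)
    (I₁ I₂ : ℝ)
    (hI₁ : I₁ = (1 / 2) * ∑ a : Fin 5, ∑ b : Fin 5, J a b * (η * J * η) a b)
    (hI₂ : I₂ = (1 / 2) * ∑ a : Fin 5, ∑ b : Fin 5, ∑ c : Fin 5, ∑ d : Fin 5,
          (J * η) a b * (J * η) b c * (J * η) c d * (J * η) d a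
        - (1 / 4) * (∑ a : Fin 5, ∑ b : Fin 5, (J * η) a b * (J * η) b a) ^ 2)
    (E₀ : ℝ) (hE₀ : E₀ = k * J 4 0)
    (c c' Jv : Fin 3 → ℝ)
    (hc : c = k • ![J 1 4, J 2 4, J 3 4])
    (hc' : c' = k • ![J 1 0, J 2 0, J 3 0])
    (hJv : Jv = k • ![J 2 3, J 3 1, J 1 2])
    (L2 A4 V3 : ℝ)
    (hL2 : L2 = c ⬝ᵥ c + c' ⬝ᵥ c' + Jv ⬝ᵥ Jv)
    (hA4 : A4 = (c ⨯₃ c') ⬝ᵥ (c ⨯₃ c') + (c ⨯₃ Jv) ⬝ᵥ (c ⨯₃ Jv) + (c' ⨯₃ Jv) ⬝ᵥ (c' ⨯₃ Jv))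
    (hV3 : V3 = c ⬝ᵥ (c' ⨯₃ Jv)) :
    (E₀ ^ 2 - L2) ^ 2 + 8 * E₀ * V3 - 4 * A4 = k ^ 4 * (I₁ ^ 2 + 2 * I₂) := by

  have hs : ∀ a b, J b a = - J a b := fun a b => by
    have := congrFun (congrFun hJ a) b
    simpa [Matrix.transpose_apply, Matrix.neg_apply] using this
  have z0 : J 0 0 = 0 := by linarith [hs 0 0]
  have z1 : J 1 1 = 0 := by linarith [hs 1 1]
  have z2 : J 2 2 = 0 := by linarith [hs 2 2]
  have z3 : J 3 3 = 0 := by linarith [hs 3 3]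
  have z4 : J 4 4 = 0 := by linarith [hs 4 4]
  have h01 := hs 0 1; have h02 := hs 0 2; have h03 := hs 0 3; have h04 := hs 0 4
  have h12 := hs 1 2; have h13 := hs 1 3; have h14 := hs 1 4
  have h23 := hs 2 3; have h24 := hs 2 4; have h34 := hs 3 4
  subst hη
  have hI1' : I₁ = -1*(J 3 4)^2 - 1*(J 2 4)^2 + (J 2 3)^2 - 1*(J 1 4)^2 + (J 1 3)^2 + (J 1 2)^2 + (J 0 4)^2 - 1*(J 0 3)^2 - 1*(J 0 2)^2 - 1*(J 0 1)^2 := by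
    rw [hI₁]
    simp only [Matrix.mul_diagonal, Matrix.diagonal_mul, Fin.sum_univ_five, Fin.isValue,
      Matrix.cons_val', Matrix.empty_val', Matrix.cons_val_fin_one, Matrix.cons_val_zero,
      Matrix.cons_val_one, Matrix.head_cons, Matrix.head_fin_const, Matrix.cons_val_two,
      Matrix.tail_cons, Matrix.cons_val_three, Matrix.cons_val_four]
    norm_num
    rw [h01, h02, h03, h04, h12, h13, h14, h23, h24, h34, z0, z1, z2, z3, z4]
    ring
  have hQ0 : (∑ b : Fin 5, ∑ c : Fin 5, ∑ dd : Fin 5,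
      (J * (Matrix.diagonal ![-1, 1, 1, 1, -1] : Matrix (Fin 5) (Fin 5) ℝ)) 0 b * (J * (Matrix.diagonal ![-1, 1, 1, 1, -1] : Matrix (Fin 5) (Fin 5) ℝ)) b c *
      (J * (Matrix.diagonal ![-1, 1, 1, 1, -1] : Matrix (Fin 5) (Fin 5) ℝ)) c dd * (J * (Matrix.diagonal ![-1, 1, 1, 1, -1] : Matrix (Fin 5) (Fin 5) ℝ)) dd 0)
      = -1*(J 0 4)^2*(J 3 4)^2 - 1*(J 0 4)^2*(J 2 4)^2 - 1*(J 0 4)^2*(J 1 4)^2 + (J 0 4)^4 + 2*(J 0 3)*(J 0 4)*(J 2 3)*(J 2 4) + 2*(J 0 3)*(J 0 4)*(J 1 3)*(J 1 4) + (J 0 3)^2*(J 3 4)^2 - 1*(J 0 3)^2*(J 2 3)^2 - 1*(J 0 3)^2*(J 1 3)^2 - 2*(J 0 3)^2*(J 0 4)^2 + (J 0 3)^4 - 2*(J 0 2)*(J 0 4)*(J 2 3)*(J 3 4) + 2*(J 0 2)*(J 0 4)*(J 1 2)*(J 1 4) + 2*(J 0 2)*(J 0 3)*(J 2 4)*(J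 3 4) - 2*(J 0 2)*(J 0 3)*(J 1 2)*(J 1 3) + (J 0 2)^2*(J 2 4)^2 - 1*(J 0 2)^2*(J 2 3)^2 - 1*(J 0 2)^2*(J 1 2)^2 - 2*(J 0 2)^2*(J 0 4)^2 + 2*(J 0 2)^2*(J 0 3)^2 + (J 0 2)^4 - 2*(J 0 1)*(J 0 4)*(J 1 3)*(J 3 4) - 2*(J 0 1)*(J 0 4)*(J 1 2)*(J 2 4) + 2*(J 0 1)*(J 0 3)*(J 1 4)*(J 3 4) + 2*(J 0 1)*(J 0 3)*(J 1 2)*(J 2 3) + 2*(J 0 1)*(J 0 2)*(J 1 4)*(J 2 4) - 2*(J 0 1)*(J 0 2)*(J 1 3)*(J 2 3) + (J 0 1)^2*(J 1 4)^2 - 1*(J 0 1)^2*(J 1 3)^2 - 1*(J 0 1)^2*(J 1 2)^2 - 2*(J 0 1)^2*(J 0 4)^2 + 2*(J 0 1)^2*(J 0 3)^2 + 2*(J 0 1)^2*(J 0 2)^2 + (J 0 1)^4 := by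
    simp only [Matrix.mul_diagonal, Matrix.diagonal_mul, Fin.sum_univ_five, Fin.isValue,
      Matrix.cons_val', Matrix.empty_val', Matrix.cons_val_fin_one, Matrix.cons_val_zero,
      Matrix.cons_val_one, Matrix.head_cons, Matrix.head_fin_const, Matrix.cons_val_two,
      Matrix.tail_cons, Matrix.cons_val_three, Matrix.cons_val_four]
    norm_num
    rw [h01, h02, h03, h04, h12, h13, h14, h23, h24, h34, z0, z1, z2, z3, z4]
    ring
  have hQ1 : (∑ b : Fin 5, ∑ c : Fin 5, ∑ dd : Fin 5,
      (J * (Matrix.diagonal ![-1, 1, 1, 1, -1] : Matrix (Fin 5) (Fin 5) ℝ)) 1 b * (J * (Matrix.diagonal ![-1, 1, 1, 1, -1] : Matrix (Fin 5) (Fin 5) ℝ)) b c *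
      (J * (Matrix.diagonal ![-1, 1, 1, 1, -1] : Matrix (Fin 5) (Fin 5) ℝ)) c dd * (J * (Matrix.diagonal ![-1, 1, 1, 1, -1] : Matrix (Fin 5) (Fin 5) ℝ)) dd 1)
      = (J 1 4)^2*(J 3 4)^2 + (J 1 4)^2*(J 2 4)^2 + (J 1 4)^4 - 2*(J 1 3)*(J 1 4)*(J 2 3)*(J 2 4) - 1*(J 1 3)^2*(J 3 4)^2 + (J 1 3)^2*(J 2 3)^2 - 2*(J 1 3)^2*(J 1 4)^2 + (J 1 3)^4 + 2*(J 1 2)*(J 1 4)*(J 2 3)*(J 3 4) - 2*(J 1 2)*(J 1 3)*(J 2 4)*(J 3 4) - 1*(J 1 2)^2*(J 2 4)^2 + (J 1 2)^2*(J 2 3)^2 - 2*(J 1 2)^2*(J 1 4)^2 + 2*(J 1 2)^2*(J 1 3)^2 + (J 1 2)^4 - 1*(J 0 4)^2*(J 1 4)^2 + 2*(J 0 3)*(J 0 4)*(J 1 3)*(J 1 4) - 1*(J 0 3)^2*(J 1 3)^2 + 2*(J 0 2)*(J 0 4)*(J 1 2)*(J 1 4) - 2*(J 0 2)*(J 0 3)*(J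 1 2)*(J 1 3) - 1*(J 0 2)^2*(J 1 2)^2 - 2*(J 0 1)*(J 0 4)*(J 1 3)*(J 3 4) - 2*(J 0 1)*(J 0 4)*(J 1 2)*(J 2 4) + 2*(J 0 1)*(J 0 3)*(J 1 4)*(J 3 4) + 2*(J 0 1)*(J 0 3)*(J 1 2)*(J 2 3) + 2*(J 0 1)*(J 0 2)*(J 1 4)*(J 2 4) - 2*(J 0 1)*(J 0 2)*(J 1 3)*(J 2 3) + 2*(J 0 1)^2*(J 1 4)^2 - 2*(J 0 1)^2*(J 1 3)^2 - 2*(J 0 1)^2*(J 1 2)^2 - 1*(J 0 1)^2*(J 0 4)^2 + (J 0 1)^2*(J 0 3)^2 + (J 0 1)^2*(J 0 2)^2 + (J 0 1)^4 := by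
    simp only [Matrix.mul_diagonal, Matrix.diagonal_mul, Fin.sum_univ_five, Fin.isValue,
      Matrix.cons_val', Matrix.empty_val', Matrix.cons_val_fin_one, Matrix.cons_val_zero,
      Matrix.cons_val_one, Matrix.head_cons, Matrix.head_fin_const, Matrix.cons_val_two,
      Matrix.tail_cons, Matrix.cons_val_three, Matrix.cons_val_four]
    norm_num
    rw [h01, h02, h03, h04, h12, h13, h14, h23, h24, h34, z0, z1, z2, z3, z4]
    ring
  have hQ2 : (∑ b : Fin 5, ∑ c : Fin 5, ∑ dd : Fin 5,
      (J * (Matrix.diagonal ![-1, 1, 1, 1, -1] : Matrix (Fin 5) (Fin 5) ℝ)) 2 b * (J * (Matrix.diagonal ![-1, 1, 1, 1, -1] : Matrix (Fin 5) (Fin 5) ℝ)) b c *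
      (J * (Matrix.diagonal ![-1, 1, 1, 1, -1] : Matrix (Fin 5) (Fin 5) ℝ)) c dd * (J * (Matrix.diagonal ![-1, 1, 1, 1, -1] : Matrix (Fin 5) (Fin 5) ℝ)) dd 2)
      = (J 2 4)^2*(J 3 4)^2 + (J 2 4)^4 - 1*(J 2 3)^2*(J 3 4)^2 - 2*(J 2 3)^2*(J 2 4)^2 + (J 2 3)^4 + (J 1 4)^2*(J 2 4)^2 - 2*(J 1 3)*(J 1 4)*(J 2 3)*(J 2 4) + (J 1 3)^2*(J 2 3)^2 + 2*(J 1 2)*(J 1 4)*(J 2 3)*(J 3 4) - 2*(J 1 2)*(J 1 3)*(J 2 4)*(J 3 4) - 2*(J 1 2)^2*(J 2 4)^2 + 2*(J 1 2)^2*(J 2 3)^2 - 1*(J 1 2)^2*(J 1 4)^2 + (J 1 2)^2*(J 1 3)^2 + (J 1 2)^4 - 1*(J 0 4)^2*(J 2 4)^2 + 2*(J 0 3)*(J 0 4)*(J 2 3)*(J 2 4) - 1*(J 0 3)^2*(J 2 3)^2 - 2*(J 0 2)*(J 0 4)*(J 2 3)*(J 3 4) + 2*(J 0 2)*(J 0 4)*(J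 1 2)*(J 1 4) + 2*(J 0 2)*(J 0 3)*(J 2 4)*(J 3 4) - 2*(J 0 2)*(J 0 3)*(J 1 2)*(J 1 3) + 2*(J 0 2)^2*(J 2 4)^2 - 2*(J 0 2)^2*(J 2 3)^2 - 2*(J 0 2)^2*(J 1 2)^2 - 1*(J 0 2)^2*(J 0 4)^2 + (J 0 2)^2*(J 0 3)^2 + (J 0 2)^4 - 2*(J 0 1)*(J 0 4)*(J 1 2)*(J 2 4) + 2*(J 0 1)*(J 0 3)*(J 1 2)*(J 2 3) + 2*(J 0 1)*(J 0 2)*(J 1 4)*(J 2 4) - 2*(J 0 1)*(J 0 2)*(J 1 3)*(J 2 3) - 1*(J 0 1)^2*(J 1 2)^2 + (J 0 1)^2*(J 0 2)^2 := by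
    simp only [Matrix.mul_diagonal, Matrix.diagonal_mul, Fin.sum_univ_five, Fin.isValue,
      Matrix.cons_val', Matrix.empty_val', Matrix.cons_val_fin_one, Matrix.cons_val_zero,
      Matrix.cons_val_one, Matrix.head_cons, Matrix.head_fin_const, Matrix.cons_val_two,
      Matrix.tail_cons, Matrix.cons_val_three, Matrix.cons_val_four]
    norm_num
    rw [h01, h02, h03, h04, h12, h13, h14, h23, h24, h34, z0, z1, z2, z3, z4]
    ring
  have hQ3 : (∑ b : Fin 5, ∑ c : Fin 5, ∑ dd : Fin 5,
      (J * (Matrix.diagonal ![-1, 1, 1, 1, -1] : Matrix (Fin 5) (Fin 5) ℝ)) 3 b * (J * (Matrix.diagonal ![-1, 1, 1, 1, -1] : Matrix (Fin 5) (Fin 5) ℝ)) b c *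
      (J * (Matrix.diagonal ![-1, 1, 1, 1, -1] : Matrix (Fin 5) (Fin 5) ℝ)) c dd * (J * (Matrix.diagonal ![-1, 1, 1, 1, -1] : Matrix (Fin 5) (Fin 5) ℝ)) dd 3)
      = (J 3 4)^4 + (J 2 4)^2*(J 3 4)^2 - 2*(J 2 3)^2*(J 3 4)^2 - 1*(J 2 3)^2*(J 2 4)^2 + (J 2 3)^4 + (J 1 4)^2*(J 3 4)^2 - 2*(J 1 3)*(J 1 4)*(J 2 3)*(J 2 4) - 2*(J 1 3)^2*(J 3 4)^2 + 2*(J 1 3)^2*(J 2 3)^2 - 1*(J 1 3)^2*(J 1 4)^2 + (J 1 3)^4 + 2*(J 1 2)*(J 1 4)*(J 2 3)*(J 3 4) - 2*(J 1 2)*(J 1 3)*(J 2 4)*(J 3 4) + (J 1 2)^2*(J 2 3)^2 + (J 1 2)^2*(J 1 3)^2 - 1*(J 0 4)^2*(J 3 4)^2 + 2*(J 0 3)*(J 0 4)*(J 2 3)*(J 2 4) + 2*(J 0 3)*(J 0 4)*(J 1 3)*(J 1 4) + 2*(J 0 3)^2*(J 3 4)^2 - 2*(J 0 3)^2*(J 2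 3)^2 - 2*(J 0 3)^2*(J 1 3)^2 - 1*(J 0 3)^2*(J 0 4)^2 + (J 0 3)^4 - 2*(J 0 2)*(J 0 4)*(J 2 3)*(J 3 4) + 2*(J 0 2)*(J 0 3)*(J 2 4)*(J 3 4) - 2*(J 0 2)*(J 0 3)*(J 1 2)*(J 1 3) - 1*(J 0 2)^2*(J 2 3)^2 + (J 0 2)^2*(J 0 3)^2 - 2*(J 0 1)*(J 0 4)*(J 1 3)*(J 3 4) + 2*(J 0 1)*(J 0 3)*(J 1 4)*(J 3 4) + 2*(J 0 1)*(J 0 3)*(J 1 2)*(J 2 3) - 2*(J 0 1)*(J 0 2)*(J 1 3)*(J 2 3) - 1*(J 0 1)^2*(J 1 3)^2 + (J 0 1)^2*(J 0 3)^2 := by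
    simp only [Matrix.mul_diagonal, Matrix.diagonal_mul, Fin.sum_univ_five, Fin.isValue,
      Matrix.cons_val', Matrix.empty_val', Matrix.cons_val_fin_one, Matrix.cons_val_zero,
      Matrix.cons_val_one, Matrix.head_cons, Matrix.head_fin_const, Matrix.cons_val_two,
      Matrix.tail_cons, Matrix.cons_val_three, Matrix.cons_val_four]
    norm_num
    rw [h01, h02, h03, h04, h12, h13, h14, h23, h24, h34, z0, z1, z2, z3, z4]
    ring
  have hQ4 : (∑ b : Fin 5, ∑ c : Fin 5, ∑ dd : Fin 5,
      (J * (Matrix.diagonal ![-1, 1, 1, 1, -1] : Matrix (Fin 5) (Fin 5) ℝ)) 4 b * (J * (Matrix.diagonal ![-1, 1, 1, 1, -1] : Matrix (Fin 5) (Fin 5) ℝ)) b c *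
      (J * (Matrix.diagonal ![-1, 1, 1, 1, -1] : Matrix (Fin 5) (Fin 5) ℝ)) c dd * (J * (Matrix.diagonal ![-1, 1, 1, 1, -1] : Matrix (Fin 5) (Fin 5) ℝ)) dd 4)
      = (J 3 4)^4 + 2*(J 2 4)^2*(J 3 4)^2 + (J 2 4)^4 - 1*(J 2 3)^2*(J 3 4)^2 - 1*(J 2 3)^2*(J 2 4)^2 + 2*(J 1 4)^2*(J 3 4)^2 + 2*(J 1 4)^2*(J 2 4)^2 + (J 1 4)^4 - 2*(J 1 3)*(J 1 4)*(J 2 3)*(J 2 4) - 1*(J 1 3)^2*(J 3 4)^2 - 1*(J 1 3)^2*(J 1 4)^2 + 2*(J 1 2)*(J 1 4)*(J 2 3)*(J 3 4) - 2*(J 1 2)*(J 1 3)*(J 2 4)*(J 3 4) - 1*(J 1 2)^2*(J 2 4)^2 - 1*(J 1 2)^2*(J 1 4)^2 - 2*(J 0 4)^2*(J 3 4)^2 - 2*(J 0 4)^2*(J 2 4)^2 - 2*(J 0 4)^2*(J 1 4)^2 + (J 0 4)^4 + 2*(J 0 3)*(J 0 4)*(J 2 3)*(J 2 4) + 2*(J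 0 3)*(J 0 4)*(J 1 3)*(J 1 4) + (J 0 3)^2*(J 3 4)^2 - 1*(J 0 3)^2*(J 0 4)^2 - 2*(J 0 2)*(J 0 4)*(J 2 3)*(J 3 4) + 2*(J 0 2)*(J 0 4)*(J 1 2)*(J 1 4) + 2*(J 0 2)*(J 0 3)*(J 2 4)*(J 3 4) + (J 0 2)^2*(J 2 4)^2 - 1*(J 0 2)^2*(J 0 4)^2 - 2*(J 0 1)*(J 0 4)*(J 1 3)*(J 3 4) - 2*(J 0 1)*(J 0 4)*(J 1 2)*(J 2 4) + 2*(J 0 1)*(J 0 3)*(J 1 4)*(J 3 4) + 2*(J 0 1)*(J 0 2)*(J 1 4)*(J 2 4) + (J 0 1)^2*(J 1 4)^2 - 1*(J 0 1)^2*(J 0 4)^2 := by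
    simp only [Matrix.mul_diagonal, Matrix.diagonal_mul, Fin.sum_univ_five, Fin.isValue,
      Matrix.cons_val', Matrix.empty_val', Matrix.cons_val_fin_one, Matrix.cons_val_zero,
      Matrix.cons_val_one, Matrix.head_cons, Matrix.head_fin_const, Matrix.cons_val_two,
      Matrix.tail_cons, Matrix.cons_val_three, Matrix.cons_val_four]
    norm_num
    rw [h01, h02, h03, h04, h12, h13, h14, h23, h24, h34, z0, z1, z2, z3, z4]
    ring
  have hS : (∑ a : Fin 5, ∑ b : Fin 5,
      (J * (Matrix.diagonal ![-1, 1, 1, 1, -1] : Matrix (Fin 5) (Fin 5) ℝ)) a b * (J * (Matrix.diagonal ![-1, 1, 1, 1, -1] : Matrix (Fin 5) (Fin 5) ℝ)) b a)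
      = 2*(J 3 4)^2 + 2*(J 2 4)^2 - 2*(J 2 3)^2 + 2*(J 1 4)^2 - 2*(J 1 3)^2 - 2*(J 1 2)^2 - 2*(J 0 4)^2 + 2*(J 0 3)^2 + 2*(J 0 2)^2 + 2*(J 0 1)^2 := by
    simp only [Matrix.mul_diagonal, Matrix.diagonal_mul, Fin.sum_univ_five, Fin.isValue,
      Matrix.cons_val', Matrix.empty_val', Matrix.cons_val_fin_one, Matrix.cons_val_zero,
      Matrix.cons_val_one, Matrix.head_cons, Matrix.head_fin_const, Matrix.cons_val_two,
      Matrix.tail_cons, Matrix.cons_val_three, Matrix.cons_val_four]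
    norm_num
    rw [h01, h02, h03, h04, h12, h13, h14, h23, h24, h34, z0, z1, z2, z3, z4]
    ring
  have hI2' : I₂ = 2*(J 1 4)^2*(J 2 3)^2 - 4*(J 1 3)*(J 1 4)*(J 2 3)*(J 2 4) + 2*(J 1 3)^2*(J 2 4)^2 + 4*(J 1 2)*(J 1 4)*(J 2 3)*(J 3 4) - 4*(J 1 2)*(J 1 3)*(J 2 4)*(J 3 4) + 2*(J 1 2)^2*(J 3 4)^2 - 2*(J 0 4)^2*(J 2 3)^2 - 2*(J 0 4)^2*(J 1 3)^2 - 2*(J 0 4)^2*(J 1 2)^2 + 4*(J 0 3)*(J 0 4)*(J 2 3)*(J 2 4) + 4*(J 0 3)*(J 0 4)*(J 1 3)*(J 1 4) - 2*(J 0 3)^2*(J 2 4)^2 - 2*(J 0 3)^2*(J 1 4)^2 + 2*(J 0 3)^2*(J 1 2)^2 - 4*(J 0 2)*(J 0 4)*(J 2 3)*(J 3 4) + 4*(J 0 2)*(J 0 4)*(J 1 2)*(J 1 4) + 4*(J 0 2)*(J 0 3)*(J 2 4)*(J 3 4) - 4*(J 0 2)*(J 0 3)*(J 1 2)*(J 1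 3) - 2*(J 0 2)^2*(J 3 4)^2 - 2*(J 0 2)^2*(J 1 4)^2 + 2*(J 0 2)^2*(J 1 3)^2 - 4*(J 0 1)*(J 0 4)*(J 1 3)*(J 3 4) - 4*(J 0 1)*(J 0 4)*(J 1 2)*(J 2 4) + 4*(J 0 1)*(J 0 3)*(J 1 4)*(J 3 4) + 4*(J 0 1)*(J 0 3)*(J 1 2)*(J 2 3) + 4*(J 0 1)*(J 0 2)*(J 1 4)*(J 2 4) - 4*(J 0 1)*(J 0 2)*(J 1 3)*(J 2 3) - 2*(J 0 1)^2*(J 3 4)^2 - 2*(J 0 1)^2*(J 2 4)^2 + 2*(J 0 1)^2*(J 2 3)^2 := by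
    rw [hI₂, hS, Fin.sum_univ_five]
    rw [hQ0, hQ1, hQ2, hQ3, hQ4]
    ring
  subst hE₀ hc hc' hJv hL2 hA4 hV3
  rw [hI1', hI2']
  simp only [crossProduct, dotProduct, Fin.sum_univ_three, Pi.smul_apply, smul_eq_mul,
    Matrix.cons_val', Matrix.empty_val', Matrix.cons_val_fin_one, Matrix.cons_val_zero,
    Matrix.cons_val_one, Matrix.head_cons, Matrix.cons_val_two, Matrix.tail_cons,
    Matrix.head_fin_const, LinearMap.mk₂_apply, Fin.isValue]
  rw [h01, h02, h03, h13, h04]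
  ring
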